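/- If G is a nearly-biconnected minor-obstruction for the class of 1-apex sub-unicyclic graphs, then G is also a minor-obstruction for the class of 1-apex pseudoforests. -/

import Mathlib

open SimpleGraph

/-- A graph is sub-unicyclic if it contains at most one cycle:
any two cycles have the same edge set. -/
def SubUnicyclic {V : Type} (G : SimpleGraph V) : Prop :=
  ∀ ⦃u w : V⦄ (c : G.Walk u u) (c' : G.Walk w w),
    c.IsCycle → c'.IsCycle → ∀ e, e ∈ c.edges ↔ e ∈ c'.edges

/-- `H` is a minor of `G`: branch decomposition via a partial map. -/
def IsMinor {W V : Type} (H : SimpleGraph W) (G : SimpleGraph V) : Prop :=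
  ∃ f : V → Option W,
    (∀ w : W, (G.induce {v | f v = some w}).Connected) ∧
    (∀ w₁ w₂ : W, H.Adj w₁ w₂ →
      ∃ v₁ v₂ : V, f v₁ = some w₁ ∧ f v₂ = some w₂ ∧ G.Adj v₁ v₂)

/-- `G` is `k`-apex sub-unicyclic. -/
def KApexSub (k : ℕ) {V : Type} (G : SimpleGraph V) : Prop :=
  ∃ S : Set V, S.ncard ≤ k ∧ SubUnicyclic (G.induce Sᶜ)

/-- `G` is a minor-obstruction for the class of `k`-apex sub-unicyclic graphs. -/
def ObstructionSub (k : ℕ) {V : Type} (G : SimpleGraph V) : Prop :=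
  ¬ KApexSub k G ∧
  ∀ (W : Type) (H : SimpleGraph W), IsMinor H G → ¬ IsMinor G H → KApexSub k H

/-- A pseudoforest: every connected component is sub-unicyclic. -/
def Pseudoforest {V : Type} (G : SimpleGraph V) : Prop :=
  ∀ C : G.ConnectedComponent, SubUnicyclic (G.induce C.supp)

def KApexPseudo (k : ℕ) {V : Type} (G : SimpleGraph V) : Prop :=
  ∃ S : Set V, S.ncard ≤ k ∧ Pseudoforest (G.induce Sᶜ)

def ObstructionPseudo (k : ℕ) {V : Type} (G : SimpleGraph V) : Prop :=
  ¬ KApexPseudo k G ∧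
  ∀ (W : Type) (H : SimpleGraph W), IsMinor H G → ¬ IsMinor G H → KApexPseudo k H

/-- The disjoint union of two triangles. -/
def twoK3 : SimpleGraph (Fin 6) :=
  SimpleGraph.fromRel (fun a b => a.val / 3 = b.val / 3)

/-- `K₄` minus an edge. -/
def K4minus : SimpleGraph (Fin 4) :=
  (⊤ : SimpleGraph (Fin 4)).deleteEdges {s(0, 1)}

/-- The butterfly graph: two triangles `{0,1,2}` and `{2,3,4}` sharing the center `2`. -/
def butterfly : SimpleGraph (Fin 5) :=
  SimpleGraph.fromRel (fun a b =>
    (a.val ≤ 1 ∧ b.val ≤ 1) ∨ (3 ≤ a.val ∧ 3 ≤ b.val) ∨ a = 2 ∨ b = 2)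

def butterflyCenter : Fin 5 := 2

/-- The disjoint union of `n` triangles. -/
def kTriangles (n : ℕ) : SimpleGraph (Fin n × Fin 3) :=
  SimpleGraph.fromRel (fun a b => a.1 = b.1)

/-- Attach a fresh butterfly to `G` by identifying one of its extremal vertices with `v`.
New vertices: `inr 0` (extremal, same triangle as `v`), `inr 1` (center),
`inr 2`, `inr 3` (extremal, second triangle). -/
def attachButterfly {V : Type} (G : SimpleGraph V) (v : V) : SimpleGraph (V ⊕ Fin 4) :=
  SimpleGraph.fromRel (fun a b =>
    (∃ x y : V, a = Sum.inl x ∧ b = Sum.inl y ∧ G.Adj x y) ∨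
    (a = Sum.inl v ∧ b = Sum.inr 0) ∨ (a = Sum.inl v ∧ b = Sum.inr 1) ∨
    (a = Sum.inr 0 ∧ b = Sum.inr 1) ∨ (a = Sum.inr 2 ∧ b = Sum.inr 3) ∨
    (a = Sum.inr 2 ∧ b = Sum.inr 1) ∨ (a = Sum.inr 3 ∧ b = Sum.inr 1))

/-- The class `Z_k` of `k`-butterfly-cacti, together with its set of central vertices. -/
inductive IsBCactus : ℕ → ∀ {V : Type}, SimpleGraph V → Set V → Prop
  | base {V : Type} (G : SimpleGraph V) (e : G ≃g butterfly) :
      IsBCactus 1 G {e.symm butterflyCenter}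
  | step {V V' : Type} (k : ℕ) (G : SimpleGraph V) (G' : SimpleGraph V') (S' : Set V')
      (v : V') (hv : v ∉ S') (h' : IsBCactus k G' S')
      (e : G ≃g attachButterfly G' v) :
      IsBCactus (k + 1) G (⇑e.symm '' (Sum.inl '' S' ∪ {Sum.inr 1}))

/-- `x` is a cut-vertex of (the connected graph) `G`. -/
def IsCutVertex {V : Type} (G : SimpleGraph V) (x : V) : Prop :=
  ¬ (G.induce {u | u ≠ x}).Preconnected

def Biconnected {V : Type} (G : SimpleGraph V) : Prop :=
  G.Connected ∧ ∀ x : V, (G.induce {u | u ≠ x}).Connected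

/-- `G` is nearly-biconnected: biconnected, or has a unique cut-vertex `x` splitting it
into a biconnected part and a triangle. -/
def NearlyBiconnected {V : Type} (G : SimpleGraph V) : Prop :=
  Biconnected G ∨
  ∃ (x : V) (A B : Set V),
    IsCutVertex G x ∧ (∀ y, IsCutVertex G y → y = x) ∧
    A ∪ B = Set.univ ∧ A ∩ B = {x} ∧
    (∀ a ∈ A, ∀ b ∈ B, G.Adj a b → a = x ∨ b = x) ∧
    Biconnected (G.induce A) ∧
    Nonempty (G.induce B ≃g (⊤ : SimpleGraph (Fin 3)))

/-- `B` is (the vertex set of) a block of `G`: a maximal connected set with no cut-vertex. -/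
def IsBlockSet {V : Type} (G : SimpleGraph V) (B : Set V) : Prop :=
  B.Nonempty ∧ (G.induce B).Connected ∧
  (∀ x : V, (G.induce (B \ {x})).Preconnected) ∧
  ∀ B' : Set V, B ⊆ B' → (G.induce B').Connected →
    (∀ x : V, (G.induce (B' \ {x})).Preconnected) → B' = B

/-- A cactus graph: no `K₄⁻` minor. -/
def IsCactus {V : Type} (G : SimpleGraph V) : Prop := ¬ IsMinor K4minus G

/-- The chain of four consecutively glued triangles
`{0,1,2}, {2,3,4}, {4,5,6}, {6,7,8}`. -/
def O11 : SimpleGraph (Fin 9) :=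
  SimpleGraph.fromRel (fun a b => ∃ i : Fin 4,
    2 * i.val ≤ a.val ∧ a.val ≤ 2 * i.val + 2 ∧ 2 * i.val ≤ b.val ∧ b.val ≤ 2 * i.val + 2)

lemma subUnicyclic_of_embedding {V W : Type} {G : SimpleGraph V} {H : SimpleGraph W}
    (f : H ↪g G) (hG : SubUnicyclic G) : SubUnicyclic H := by
  intro u w c c' hc hc' e
  have key := hG (c.map f.toHom) (c'.map f.toHom) (hc.map f.injective)
    (hc'.map f.injective) (Sym2.map f e)
  rw [Walk.edges_map, Walk.edges_map] at key
  calc e ∈ c.edges ↔ Sym2.map ⇑f e ∈ c.edges.map (Sym2.map ⇑f) :=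
        (List.mem_map_of_injective (Sym2.map.injective f.injective)).symm
    _ ↔ Sym2.map ⇑f e ∈ c'.edges.map (Sym2.map ⇑f) := key
    _ ↔ e ∈ c'.edges := List.mem_map_of_injective (Sym2.map.injective f.injective)

lemma pseudoforest_of_subUnicyclic {V : Type} {G : SimpleGraph V}
    (h : SubUnicyclic G) : Pseudoforest G :=
  fun C => subUnicyclic_of_embedding (Embedding.induce C.supp) h

def liftWalk {V : Type} {H : SimpleGraph V} (s : Set V) :
    ∀ {u w : V} (p : H.Walk u w) (hp : ∀ z ∈ p.support, z ∈ s),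
      (H.induce s).Walk ⟨u, hp u p.start_mem_support⟩ ⟨w, hp w p.end_mem_support⟩
  | _, _, Walk.nil, _ => Walk.nil
  | u, w, Walk.cons (v := v) h p, hp =>
      Walk.cons
        (show (H.induce s).Adj ⟨u, hp u (Walk.start_mem_support _)⟩
            ⟨v, hp v (by rw [Walk.support_cons]; exact List.mem_cons_of_mem _ p.start_mem_support)⟩
          from h)
        (liftWalk s p (fun z hz => hp z (by rw [Walk.support_cons]; exact List.mem_cons_of_mem _ hz)))

lemma liftWalk_map {V : Type} {H : SimpleGraph V} (s : Set V) {u w : V}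
    (p : H.Walk u w) (hp : ∀ z ∈ p.support, z ∈ s) :
    (liftWalk s p hp).map (Embedding.induce s).toHom = p := by
  induction p with
  | nil => simp [liftWalk]
  | cons h p ih =>
      simp only [liftWalk, Walk.map_cons]
      exact congrArg _ (ih _)

lemma reach_closed {V : Type} {H : SimpleGraph V} {s : Set V}
    (hcl : ∀ a b : V, a ∈ s → H.Adj a b → b ∈ s) :
    ∀ {a b : V} (p : H.Walk a b), a ∈ s → ∀ z ∈ p.support, z ∈ s := by
  intro a b p
  induction p with
  | nil => intro ha z hz; rw [Walk.support_nil, List.mem_singleton] at hz; exact hz ▸ ha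
  | cons h p ih =>
      intro ha z hz
      rw [Walk.support_cons, List.mem_cons] at hz
      rcases hz with rfl | hz
      · exact ha
      · exact ih (hcl _ _ ha h) z hz

lemma subUnicyclic_of_pseudoforest_cycles {V : Type} {H : SimpleGraph V}
    (hpf : Pseudoforest H)
    (hreach : ∀ ⦃u w : V⦄ (c : H.Walk u u) (c' : H.Walk w w),
      c.IsCycle → c'.IsCycle → H.Reachable u w) :
    SubUnicyclic H := by
  classical
  intro u w c c' hc hc' e
  set C := H.connectedComponentMk u with hC
  have hsupp : ∀ {a b : V} (p : H.Walk a b), a ∈ C.supp → ∀ z ∈ p.support, z ∈ C.supp := by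
    intro a b p ha z hz
    rw [ConnectedComponent.mem_supp_iff] at ha ⊢
    rw [← ConnectedComponent.sound ⟨p.takeUntil z hz⟩]
    exact ha
  have hu : u ∈ C.supp := by rw [ConnectedComponent.mem_supp_iff]
  have hw : w ∈ C.supp := by
    rw [ConnectedComponent.mem_supp_iff]
    exact (ConnectedComponent.sound (hreach c c' hc hc')).symm
  have hcs : ∀ z ∈ c.support, z ∈ C.supp := hsupp c hu
  have hcs' : ∀ z ∈ c'.support, z ∈ C.supp := hsupp c' hw
  have e1 := liftWalk_map C.supp c hcs
  have e1' := liftWalk_map C.supp c' hcs'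
  have hinj : Function.Injective ⇑(Embedding.induce C.supp : H.induce C.supp ↪g H).toHom :=
    (Embedding.induce C.supp : H.induce C.supp ↪g H).injective
  have hc0 : (liftWalk C.supp c hcs).IsCycle := by
    rw [← Walk.map_isCycle_iff_of_injective hinj]; rw [e1]; exact hc
  have hc0' : (liftWalk C.supp c' hcs').IsCycle := by
    rw [← Walk.map_isCycle_iff_of_injective hinj]; rw [e1']; exact hc'
  have key := hpf C _ _ hc0 hc0'
  have h1 : List.map (Sym2.map ⇑(Embedding.induce C.supp : H.induce C.supp ↪g H).toHom)
      (liftWalk C.supp c hcs).edges = c.edges := by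
    have h := congrArg Walk.edges e1
    rw [Walk.edges_map] at h
    exact h
  have h1' : List.map (Sym2.map ⇑(Embedding.induce C.supp : H.induce C.supp ↪g H).toHom)
      (liftWalk C.supp c' hcs').edges = c'.edges := by
    have h := congrArg Walk.edges e1'
    rw [Walk.edges_map] at h
    exact h
  rw [← h1, ← h1']
  simp only [List.mem_map]
  constructor
  · rintro ⟨d, hd, rfl⟩; exact ⟨d, (key d).mp hd, rfl⟩
  · rintro ⟨d, hd, rfl⟩; exact ⟨d, (key d).mpr hd, rfl⟩

lemma subUnicyclic_of_pseudoforest_connected {V : Type} {H : SimpleGraph V}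
    (hcon : H.Connected) (hpf : Pseudoforest H) : SubUnicyclic H :=
  subUnicyclic_of_pseudoforest_cycles hpf (fun u w _ _ _ _ => hcon.preconnected u w)

lemma connected_of_pieces {V : Type} {G : SimpleGraph V} {A B : Set V} {x : V}
    (hAB : A ∪ B = Set.univ) (hABx : A ∩ B = {x})
    (hA : (G.induce A).Connected) (hB : (G.induce B).Connected) : G.Connected := by
  have hxAB : x ∈ A ∩ B := by rw [hABx]; exact rfl
  have hreach : ∀ z : V, G.Reachable z x := by
    intro z
    have hz : z ∈ A ∪ B := by rw [hAB]; trivial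
    rcases hz with hz | hz
    · exact (hA.preconnected ⟨z, hz⟩ ⟨x, hxAB.1⟩).map
        (Embedding.induce A : G.induce A ↪g G).toHom
    · exact (hB.preconnected ⟨z, hz⟩ ⟨x, hxAB.2⟩).map
        (Embedding.induce B : G.induce B ↪g G).toHom
  haveI : Nonempty V := ⟨x⟩
  exact ⟨fun a b => (hreach a).trans (hreach b).symm⟩

/-- a nearly-biconnected minor-obstruction for `1`-apex
sub-unicyclic graphs is also a minor-obstruction for `1`-apex pseudoforests. -/
theorem nearly_biconnected_obstruction {V : Type} [Finite V] (G : SimpleGraph V)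
    (hnb : NearlyBiconnected G) (h : ObstructionSub 1 G) :
    ObstructionPseudo 1 G := by
  classical
  obtain ⟨hnk, hmin⟩ := h
  constructor
  · rintro ⟨S, hS, hpf⟩
    apply hnk
    refine ⟨S, hS, ?_⟩
    have hsub : S.Subsingleton := fun a ha b hb =>
      (Set.ncard_le_one_iff (Set.toFinite S)).mp hS ha hb
    rcases hsub.eq_empty_or_singleton with rfl | ⟨v, rfl⟩
    · -- S = ∅
      have hGc : G.Connected := by
        rcases hnb with hbi | ⟨x, A, B, _, _, hAB, hABx, _, hbiA, ⟨eB⟩⟩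
        · exact hbi.1
        · exact connected_of_pieces hAB hABx hbiA.1 ((Iso.connected_iff eB).mpr connected_top)
      have hset : ((∅ : Set V)ᶜ) = Set.univ := Set.compl_empty
      rw [hset] at hpf ⊢
      exact subUnicyclic_of_pseudoforest_connected
        ((Iso.connected_iff (induceUnivIso G)).mpr hGc) hpf
    · -- S = {v}
      have hset : ({v} : Set V)ᶜ = {u | u ≠ v} := rfl
      rcases hnb with hbi | ⟨x, A, B, hcx, huniq, hAB, hABx, hsep, hbiA, ⟨eB⟩⟩
      · rw [hset] at hpf ⊢
        exact subUnicyclic_of_pseudoforest_connected (hbi.2 v) hpf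
      · have hxAB : x ∈ A ∩ B := by rw [hABx]; exact rfl
        by_cases hvx : v = x
        · subst hvx
          -- v is the cut vertex
          apply subUnicyclic_of_pseudoforest_cycles hpf
          set s : Set V := ({v} : Set V)ᶜ with hs
          have hclB : ∀ a b : ↥s, a ∈ {y : ↥s | (y : V) ∈ B} → (G.induce s).Adj a b →
              b ∈ {y : ↥s | (y : V) ∈ B} := by
            intro a b haB hadj
            have hbx : ¬ (b : V) = v := b.prop
            have hax : ¬ (a : V) = v := a.prop
            by_cases hbA : (b : V) ∈ A
            · rcases hsep (b : V) hbA (a : V) haB hadj.symm with h1 | h1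
              · exact absurd h1 hbx
              · exact absurd h1 hax
            · have hb : (b : V) ∈ A ∪ B := by rw [hAB]; trivial
              rcases hb with h1 | h1
              · exact absurd h1 hbA
              · exact h1
          have hB3 : B.ncard = 3 := by
            rw [← Nat.card_coe_set_eq, Nat.card_congr eB.toEquiv]
            simp
          have hBx2 : (B \ {v}).ncard = 2 := by
            rw [Set.ncard_diff_singleton_of_mem hxAB.2, hB3]
          have hstart : ∀ (z : ↥s) (c : (G.induce s).Walk z z), c.IsCycle → (z : V) ∈ A := by
            intro z c hc
            by_contra hzA
            have hzB : z ∈ {y : ↥s | (y : V) ∈ B} := by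
              have : (z : V) ∈ A ∪ B := by rw [hAB]; trivial
              rcases this with h1 | h1
              · exact absurd h1 hzA
              · exact h1
            have hsuppB : ∀ y ∈ c.support, (y : V) ∈ B \ {v} :=
              fun y hy => ⟨reach_closed hclB c hzB y hy, y.prop⟩
            set l : List V := c.support.tail.map Subtype.val with hl
            have hndl : l.Nodup := hc.support_nodup.map Subtype.val_injective
            have hlenl : 3 ≤ l.length := by
              rw [hl, List.length_map, List.length_tail, Walk.length_support]
              have := hc.three_le_length
              omega
            have hsubset : (l.toFinset : Set V) ⊆ B \ {v} := by
              intro y hy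
              simp only [List.coe_toFinset, Set.mem_setOf_eq, hl, List.mem_map] at hy
              obtain ⟨y', hy', rfl⟩ := hy
              exact hsuppB y' (List.mem_of_mem_tail hy')
            have hfin3 : 3 ≤ (B \ {v}).ncard := by
              calc 3 ≤ l.length := hlenl
                _ = l.toFinset.card := (List.toFinset_card_of_nodup hndl).symm
                _ = ((l.toFinset : Finset V) : Set V).ncard := (Set.ncard_coe_finset _).symm
                _ ≤ (B \ {v}).ncard := Set.ncard_le_ncard hsubset (Set.toFinite _)
            omega
          intro u w c c' hc hc'
          have huA : (u : V) ∈ A := hstart u c hc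
          have hwA : (w : V) ∈ A := hstart w c' hc'
          have hxA : v ∈ A := hxAB.1
          have hcon := hbiA.2 ⟨v, hxA⟩
          let φ : ((G.induce A).induce {y : ↥A | y ≠ ⟨v, hxA⟩}) →g (G.induce s) :=
            { toFun := fun z => ⟨((z : ↥A) : V), fun hEq => z.prop (Subtype.ext hEq)⟩,
              map_rel' := fun hadj => hadj }
          let u' : ↥{y : ↥A | y ≠ ⟨v, hxA⟩} :=
            ⟨⟨(u : V), huA⟩, fun hEq => u.prop (congrArg Subtype.val hEq)⟩
          let w' : ↥{y : ↥A | y ≠ ⟨v, hxA⟩} :=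
            ⟨⟨(w : V), hwA⟩, fun hEq => w.prop (congrArg Subtype.val hEq)⟩
          have hr := (hcon.preconnected u' w').map φ
          have hu' : φ u' = u := Subtype.ext rfl
          have hw' : φ w' = w := Subtype.ext rfl
          rwa [hu', hw'] at hr
        · have hncv : ¬ IsCutVertex G v := fun hcv => hvx (huniq v hcv)
          have hpre : (G.induce {u | u ≠ v}).Preconnected := not_not.mp hncv
          haveI : Nonempty ({u | u ≠ v} : Set V) := ⟨⟨x, fun hxe => hvx hxe.symm⟩⟩
          rw [hset] at hpf ⊢
          exact subUnicyclic_of_pseudoforest_connected ⟨hpre⟩ hpf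
  · intro W Hw hm hnm
    obtain ⟨S, hS, hsu⟩ := hmin W Hw hm hnm
    exact ⟨S, hS, pseudoforest_of_subUnicyclic hsu⟩
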